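/- arXiv:1108.4217 — 2 statements merged into one kernel-verified Lean document; each statement's English description precedes it below -/
import Mathlib

section
/- Suppose (λ*, x*, t*) is an optimal solution of the BILP max Σᵢ tᵢλᵢ − t over the BILP feasible set, with optimal value c* = Σᵢ tᵢλᵢ* − t*. If c* ≤ 0, then every (x, t) in the BILP feasible set (in particular, every (x, t) ∈ T ∩ D̃ with x ∈ {0,1}ⁿ, provided D̃ ⊆ P) satisfies pᵀx − t ≤ γ, i.e., lies in the upper halfspace H₊ = {(x,t) : pᵀx − t ≤ γ} of the hyperplane H through the points (vⁱ, tᵢ). -/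
open scoped BigOperators

/-- The Lovász extension of a set function `f` on subsets of `Fin n`. -/
noncomputable def lovasz {n : ℕ} (f : Finset (Fin n) → ℝ) (p : Fin n → ℝ) : ℝ := by
  classical
  exact
    let vals : List ℝ := ((Finset.univ.image p).sort (· ≤ ·)).reverse
    let m : ℕ := vals.length
    let U : ℕ → Finset (Fin n) := fun j => Finset.univ.filter (fun i => vals.getD j 0 ≤ p i)
    (∑ j ∈ Finset.range (m - 1), (vals.getD j 0 - vals.getD (j + 1) 0) * f (U j))
      + vals.getD (m - 1) 0 * f (U (m - 1))

/-- `D̃ = {(x,t) : x ∈ [0,1]ⁿ, f̂(x) ≤ t}`. -/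
noncomputable def Dtilde {n : ℕ} (f : Finset (Fin n) → ℝ) : Set ((Fin n → ℝ) × ℝ) :=
  {q | (∀ i, 0 ≤ q.1 i ∧ q.1 i ≤ 1) ∧ lovasz f q.1 ≤ q.2}

/-- `P = {(x,t) : Ax + at ≤ b}`. -/
def Pset {n m : ℕ} (A : Matrix (Fin m) (Fin n) ℝ) (a b : Fin m → ℝ) :
    Set ((Fin n → ℝ) × ℝ) :=
  {q | ∀ i, A.mulVec q.1 i + a i * q.2 ≤ b i}

/-- The BILP feasible set. -/
def BILPfeas {n m : ℕ} (v : Fin (n + 1) → Fin n → ℝ) (A : Matrix (Fin m) (Fin n) ℝ)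
    (a b : Fin m → ℝ) (lam : Fin (n + 1) → ℝ) (x : Fin n → ℝ) (t : ℝ) : Prop :=
  (∀ i, 0 ≤ lam i) ∧ (∑ i, lam i) = 1 ∧ x = ∑ i, lam i • v i ∧
    (∀ j, x j = 0 ∨ x j = 1) ∧ ∀ i, A.mulVec x i + a i * t ≤ b i

/-- If `(λ*, x*, t*)` is an optimal solution of the BILP `max ∑ᵢ tᵢλᵢ - t` over the BILP
feasible set with optimal value `c* = ∑ᵢ tᵢλᵢ* - t* ≤ 0`, then every `(x, t)` in the BILP
feasible set satisfies `pᵀx - t ≤ γ`, i.e. lies in the upper halfspace `H₊` of the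
hyperplane `H` through the points `(vⁱ, tᵢ)`; in particular (provided `D̃ ⊆ P`) so does
every `(x, t) ∈ T ∩ D̃` with `x ∈ {0,1}ⁿ`. -/
theorem stmt2 {n m : ℕ} (f : Finset (Fin n) → ℝ)
    (hf : ∀ A B : Finset (Fin n), f (A ∪ B) + f (A ∩ B) ≤ f A + f B)
    (v : Fin (n + 1) → Fin n → ℝ) (hv : AffineIndependent ℝ v)
    (A : Matrix (Fin m) (Fin n) ℝ) (a b : Fin m → ℝ)
    (t' : Fin (n + 1) → ℝ) (p : Fin n → ℝ) (γ : ℝ)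
    (hH : ∀ i, (∑ j, p j * v i j) - t' i = γ)
    (lamStar : Fin (n + 1) → ℝ) (xStar : Fin n → ℝ) (tStar : ℝ)
    (hfeas : BILPfeas v A a b lamStar xStar tStar)
    (hopt : ∀ (lam : Fin (n + 1) → ℝ) (x : Fin n → ℝ) (t : ℝ), BILPfeas v A a b lam x t →
      (∑ i, t' i * lam i) - t ≤ (∑ i, t' i * lamStar i) - tStar)
    (cStar : ℝ) (hcdef : cStar = (∑ i, t' i * lamStar i) - tStar)
    (hc0 : cStar ≤ 0) :
    (∀ (lam : Fin (n + 1) → ℝ) (x : Fin n → ℝ) (t : ℝ), BILPfeas v A a b lam x t →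
      (∑ j, p j * x j) - t ≤ γ) ∧
    (Dtilde f ⊆ Pset A a b →
      ∀ (x : Fin n → ℝ) (t : ℝ), x ∈ convexHull ℝ (Set.range v) →
        (∀ j, x j = 0 ∨ x j = 1) → (x, t) ∈ Dtilde f →
        (∑ j, p j * x j) - t ≤ γ) := by
  classical
  have key : ∀ (lam : Fin (n + 1) → ℝ) (x : Fin n → ℝ) (t : ℝ), BILPfeas v A a b lam x t →
      (∑ j, p j * x j) - t ≤ γ := by
    intro lam x t hfe
    obtain ⟨hlam0, hlam1, hx, hbin, hineq⟩ := hfe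
    have hval := hopt lam x t ⟨hlam0, hlam1, hx, hbin, hineq⟩
    have hpx : (∑ j, p j * x j) = ∑ i, lam i * (t' i + γ) := by
      subst hx
      calc (∑ j, p j * (∑ i, lam i • v i) j)
          = ∑ j, ∑ i, p j * (lam i * v i j) := by
            apply Finset.sum_congr rfl; intro j _
            simp only [Finset.sum_apply, Pi.smul_apply, smul_eq_mul, Finset.mul_sum]
        _ = ∑ i, ∑ j, p j * (lam i * v i j) := Finset.sum_comm
        _ = ∑ i, lam i * (t' i + γ) := by
            apply Finset.sum_congr rfl; intro i _
            have hvi : (∑ j, p j * v i j) = t' i + γ := by have := hH i; linarith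
            calc (∑ j, p j * (lam i * v i j)) = lam i * ∑ j, p j * v i j := by
                  rw [Finset.mul_sum]
                  apply Finset.sum_congr rfl; intro j _; ring
              _ = lam i * (t' i + γ) := by rw [hvi]
    have hsum : (∑ i, lam i * (t' i + γ)) = (∑ i, t' i * lam i) + γ := by
      simp only [mul_add, Finset.sum_add_distrib]
      rw [← Finset.sum_mul, hlam1, one_mul]
      congr 1
      apply Finset.sum_congr rfl; intro i _; ring
    rw [hpx, hsum]
    linarith
  refine ⟨key, ?_⟩
  intro hsub x t hxc hbin hxd
  rw [convexHull_range_eq_exists_affineCombination] at hxc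
  obtain ⟨s, w, hw0, hw1, hxw⟩ := hxc
  set lam : Fin (n + 1) → ℝ := fun i => if i ∈ s then w i else 0 with hlamdef
  have hlam0 : ∀ i, 0 ≤ lam i := by
    intro i
    by_cases h : i ∈ s
    · simpa [hlamdef, h] using hw0 i h
    · simp [hlamdef, h]
  have hlam1 : (∑ i, lam i) = 1 := by
    simp only [hlamdef]
    rw [Finset.sum_ite_mem, Finset.univ_inter, hw1]
  have hxeq : x = ∑ i, lam i • v i := by
    rw [← hxw, Finset.affineCombination_eq_linear_combination _ _ _ hw1]
    rw [show (∑ i, lam i • v i) = ∑ i, (if i ∈ s then w i • v i else 0) from ?_]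
    · rw [Finset.sum_ite_mem, Finset.univ_inter]
    · apply Finset.sum_congr rfl; intro i _
      by_cases h : i ∈ s <;> simp [hlamdef, h]
  have hP := hsub hxd
  exact key lam x t ⟨hlam0, hlam1, hxeq, hbin, fun i => hP i⟩
end

section
/- Let r = Σᵢλᵢvⁱ with λᵢ ≥ 0, Σᵢλᵢ = 1, and r ≠ vⁱ for all i. For each i with λᵢ > 0, let Sⁱ = conv{v¹,...,v^{i−1}, r, v^{i+1},...,v^{n+1}} be the subsimplex obtained by replacing vⁱ with r. Then the collection {Sⁱ : λᵢ > 0} is a partition of S: the union of the Sⁱ over all i with λᵢ > 0 equals S, and for i ≠ j (both with λᵢ, λⱼ > 0) the interiors of Sⁱ and Sʲ are disjoint. -/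
open scoped BigOperators

/-- Radial subdivision of a simplex: let `S = conv{v¹,...,v^{n+1}}` be an `n`-simplex and
`r = ∑ᵢ λᵢvⁱ` a point of `S` (with `λᵢ ≥ 0`, `∑ᵢ λᵢ = 1`) distinct from every vertex.
For each `i` with `λᵢ > 0`, let `Sⁱ` be the subsimplex obtained by replacing `vⁱ` with `r`.
Then `{Sⁱ : λᵢ > 0}` is a partition of `S`: the union of the `Sⁱ` equals `S`, and for
`i ≠ j` the interiors of `Sⁱ` and `Sʲ` are disjoint. -/
theorem stmt5 {n : ℕ} (v : Fin (n + 1) → Fin n → ℝ) (hv : AffineIndependent ℝ v)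
    (lam : Fin (n + 1) → ℝ) (hlam0 : ∀ i, 0 ≤ lam i) (hlam1 : (∑ i, lam i) = 1)
    (r : Fin n → ℝ) (hr : r = ∑ i, lam i • v i) (hrv : ∀ i, r ≠ v i) :
    (⋃ i ∈ {i : Fin (n + 1) | 0 < lam i},
        convexHull ℝ (Set.range (Function.update v i r))) = convexHull ℝ (Set.range v) ∧
    ∀ i j : Fin (n + 1), i ≠ j → 0 < lam i → 0 < lam j →
      interior (convexHull ℝ (Set.range (Function.update v i r))) ∩
        interior (convexHull ℝ (Set.range (Function.update v j r))) = ∅ := by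
  classical
  have htop : affineSpan ℝ (Set.range v) = ⊤ := by
    rw [hv.affineSpan_eq_top_iff_card_eq_finrank_add_one]
    simp
  let b : AffineBasis (Fin (n+1)) ℝ (Fin n → ℝ) := ⟨v, hv, htop⟩
  have hbv : ∀ k, b k = v k := fun _ => rfl
  have hrcomb : r = Finset.univ.affineCombination ℝ (⇑b) lam := by
    rw [Finset.affineCombination_eq_linear_combination _ _ _ hlam1, hr]
    rfl
  have hcoord_r : ∀ k, b.coord k r = lam k := fun k => by
    rw [hrcomb]; exact b.coord_apply_combination_of_mem (Finset.mem_univ k) hlam1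
  have hcoord_v : ∀ k m : Fin (n+1), b.coord k (v m) = if k = m then 1 else 0 := fun k m => by
    rw [← hbv]; exact b.coord_apply k m
  -- membership of r in the big simplex
  have hrS : r ∈ convexHull ℝ (Set.range v) := by
    rw [hr, ← Finset.univ.centerMass_eq_of_sum_1 v hlam1]
    exact Finset.univ.centerMass_mem_convexHull (fun i _ => hlam0 i)
      (by rw [hlam1]; norm_num) (fun i _ => Set.mem_range_self i)
  -- Part 1
  have part1 : (⋃ i ∈ {i : Fin (n + 1) | 0 < lam i},
      convexHull ℝ (Set.range (Function.update v i r))) = convexHull ℝ (Set.range v) := by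
    apply Set.Subset.antisymm
    · apply Set.iUnion₂_subset
      intro i _
      apply convexHull_min _ (convex_convexHull ℝ _)
      rintro _ ⟨k, rfl⟩
      by_cases hk : k = i
      · subst hk; rw [Function.update_self]; exact hrS
      · rw [Function.update_of_ne hk]
        exact subset_convexHull ℝ _ (Set.mem_range_self k)
    · intro x hx
      rw [convexHull_range_eq_exists_affineCombination] at hx
      obtain ⟨s, w, hw0, hw1, rfl⟩ := hx
      set μ : Fin (n + 1) → ℝ := fun k => if k ∈ s then w k else 0 with hμ
      have hμ0 : ∀ k, 0 ≤ μ k := by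
        intro k; simp only [hμ]; split
        · exact hw0 _ ‹_›
        · exact le_rfl
      have hμ1 : ∑ k, μ k = 1 := by
        rw [← hw1, Finset.sum_ite_mem, Finset.univ_inter]
      have hxrep : s.affineCombination ℝ v w = ∑ k, μ k • v k := by
        rw [Finset.affineCombination_eq_linear_combination _ _ _ hw1]
        calc ∑ k ∈ s, w k • v k = ∑ k ∈ s, μ k • v k :=
              Finset.sum_congr rfl fun k hk => by simp [hμ, hk]
          _ = ∑ k, μ k • v k :=
              Finset.sum_subset (Finset.subset_univ s) (fun k _ hk => by simp [hμ, hk])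
      rw [hxrep]
      -- pick the index minimizing μ/λ among positive λ
      set T : Finset (Fin (n + 1)) := Finset.univ.filter (fun k => 0 < lam k) with hT
      have hTne : T.Nonempty := by
        by_contra hT0
        rw [Finset.not_nonempty_iff_eq_empty, Finset.filter_eq_empty_iff] at hT0
        have hz : ∀ k : Fin (n+1), lam k = 0 := fun k =>
          le_antisymm (not_lt.mp (hT0 (Finset.mem_univ k))) (hlam0 k)
        simp [hz] at hlam1
      obtain ⟨i, hiT, hmin⟩ := T.exists_min_image (fun k => μ k / lam k) hTne
      have hlami : 0 < lam i := (Finset.mem_filter.mp hiT).2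
      set t : ℝ := μ i / lam i with ht
      have ht0 : 0 ≤ t := div_nonneg (hμ0 i) hlami.le
      have htlami : t * lam i = μ i := div_mul_cancel₀ _ hlami.ne'
      set w' : Fin (n + 1) → ℝ := fun k => if k = i then t else μ k - t * lam k with hw'
      have hw'0 : ∀ k, 0 ≤ w' k := by
        intro k
        simp only [hw']
        split
        · exact ht0
        · rcases (hlam0 k).lt_or_eq with h | h
          · have hk : k ∈ T := Finset.mem_filter.mpr ⟨Finset.mem_univ k, h⟩
            have hle := hmin k hk
            rw [div_le_div_iff₀ hlami h] at hle
            nlinarith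
          · rw [← h]; simpa using hμ0 k
      have hw'1 : ∑ k, w' k = 1 := by
        have hsplit : ∑ k, w' k = t + ∑ k ∈ Finset.univ.erase i, (μ k - t * lam k) := by
          rw [← Finset.add_sum_erase _ w' (Finset.mem_univ i)]
          simp only [hw', if_pos rfl]
          congr 1
          exact Finset.sum_congr rfl fun k hk => if_neg (Finset.ne_of_mem_erase hk)
        have h2 : ∑ k ∈ Finset.univ.erase i, (μ k - t * lam k)
            = (1 - μ i) - t * (1 - lam i) := by
          rw [Finset.sum_sub_distrib, ← Finset.mul_sum,
              Finset.sum_erase_eq_sub (Finset.mem_univ i),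
              Finset.sum_erase_eq_sub (Finset.mem_univ i), hμ1, hlam1]
        rw [hsplit, h2]
        linear_combination htlami
      have hw'x : ∑ k, w' k • Function.update v i r k = ∑ k, μ k • v k := by
        have hL : ∑ k, w' k • Function.update v i r k
            = t • r + ∑ k ∈ Finset.univ.erase i, (μ k - t * lam k) • v k := by
          rw [← Finset.add_sum_erase _ (fun k => w' k • Function.update v i r k)
                (Finset.mem_univ i)]
          simp only [hw', if_pos rfl, Function.update_self]
          congr 1
          exact Finset.sum_congr rfl fun k hk => by
            rw [if_neg (Finset.ne_of_mem_erase hk),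
                Function.update_of_ne (Finset.ne_of_mem_erase hk)]
        have hR : ∑ k, μ k • v k = μ i • v i + ∑ k ∈ Finset.univ.erase i, μ k • v k :=
          (Finset.add_sum_erase _ (fun k => μ k • v k) (Finset.mem_univ i)).symm
        have hsmul : t • r = μ i • v i + ∑ k ∈ Finset.univ.erase i, (t * lam k) • v k := by
          rw [hr, Finset.smul_sum,
              Finset.sum_congr rfl (fun k _ => smul_smul t (lam k) (v k)),
              ← Finset.add_sum_erase _ (fun k => (t * lam k) • v k) (Finset.mem_univ i),
              htlami]
        rw [hL, hsmul, hR, add_assoc, ← Finset.sum_add_distrib]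
        congr 1
        exact Finset.sum_congr rfl fun k _ => by
          rw [← add_smul, show t * lam k + (μ k - t * lam k) = μ k from by ring]
      apply Set.mem_biUnion (show i ∈ {k : Fin (n+1) | 0 < lam k} from hlami)
      rw [← hw'x, ← Finset.univ.centerMass_eq_of_sum_1 _ hw'1]
      exact Finset.univ.centerMass_mem_convexHull (fun k _ => hw'0 k)
        (by rw [hw'1]; norm_num) (fun k _ => Set.mem_range_self k)
  refine ⟨part1, ?_⟩
  -- Part 2: disjoint interiors
  have key : ∀ i j : Fin (n + 1), convexHull ℝ (Set.range (Function.update v i r)) ⊆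
      {x : Fin n → ℝ | lam j * b.coord i x ≤ lam i * b.coord j x} := by
    intro i j
    apply convexHull_min
    · rintro _ ⟨k, rfl⟩
      by_cases hk : k = i
      · subst hk
        rw [Function.update_self]
        simp only [Set.mem_setOf_eq, hcoord_r]
        rw [mul_comm]
      · rw [Function.update_of_ne hk]
        simp only [Set.mem_setOf_eq, hcoord_v]
        rw [if_neg (fun h => hk h.symm)]
        rw [mul_zero]
        split
        · exact mul_nonneg (hlam0 i) zero_le_one
        · exact mul_nonneg (hlam0 i) le_rfl
    · intro x hx y hy a c ha hc hac
      simp only [Set.mem_setOf_eq] at *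
      have hcx : ∀ m : Fin (n + 1), b.coord m (a • x + c • y)
          = a * b.coord m x + c * b.coord m y := fun m => Convex.combo_affine_apply hac
      rw [hcx, hcx]
      nlinarith [mul_le_mul_of_nonneg_left hx ha, mul_le_mul_of_nonneg_left hy hc]
  intro i j hij hi hj
  rw [← interior_inter, Set.eq_empty_iff_forall_notMem]
  intro x hx
  have hxZ : x ∈ interior {z : Fin n → ℝ | lam j * b.coord i z = lam i * b.coord j z} := by
    refine interior_mono ?_ hx
    intro z hz
    exact le_antisymm (key i j hz.1) (key j i hz.2)
  obtain ⟨ε, hε, hball⟩ := Metric.isOpen_iff.mp isOpen_interior x hxZ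
  have hx0 : lam j * b.coord i x = lam i * b.coord j x := by
    have := interior_subset hxZ
    simpa using this
  set t : ℝ := ε / (2 * (‖v i - x‖ + 1)) with htd
  have hden : 0 < ‖v i - x‖ + 1 := by positivity
  have ht : 0 < t := by positivity
  set z : Fin n → ℝ := (1 - t) • x + t • v i with hz
  have hzball : z ∈ Metric.ball x ε := by
    have : z - x = t • (v i - x) := by
      simp only [hz]
      module
    rw [Metric.mem_ball, dist_eq_norm, this, norm_smul, Real.norm_eq_abs, abs_of_pos ht]
    calc t * ‖v i - x‖ ≤ t * (‖v i - x‖ + 1) := by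
          nlinarith [norm_nonneg (v i - x)]
      _ = ε / 2 := by
          rw [htd]; field_simp
      _ < ε := by linarith
  have hzZ : lam j * b.coord i z = lam i * b.coord j z := by
    have := interior_subset (hball hzball)
    simpa using this
  have hcz : ∀ m : Fin (n + 1), b.coord m z
      = (1 - t) * b.coord m x + t * b.coord m (v i) := fun m =>
    Convex.combo_affine_apply (by ring)
  rw [hcz, hcz, hcoord_v, hcoord_v, if_pos rfl, if_neg hij.symm] at hzZ
  have : t * lam j = 0 := by nlinarith [hzZ, hx0]
  nlinarith
end
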